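/- For every k ≥ 0 and ℓ ≥ 1, the number of occurrences of the pattern [1-2^ℓ) in the Peano word X_{2k+2} equals C(4^{2k+1}, ℓ) + C(4^{2k+1}-2^{2k+1}, ℓ). -/

import Mathlib

/-- φ1: reverse the word and apply 1↦4, 2↦1, 3↦2, 4↦3. -/
def phi1 (A : List ℕ) : List ℕ := A.reverse.map (fun x => if x = 1 then 4 else x - 1)

/-- φ2: reverse the word and apply 1↦2, 2↦3, 3↦4, 4↦1. -/
def phi2 (A : List ℕ) : List ℕ := A.reverse.map (fun x => if x = 4 then 1 else x + 1)

/-- The Peano words: `peano 1 = 123`, `peano (n+1) = φ1(Xₙ) 1 Xₙ 2 Xₙ 3 φ2(Xₙ)`. -/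
def peano : ℕ → List ℕ
  | 0 => []
  | 1 => [1, 2, 3]
  | n + 2 =>
      phi1 (peano (n + 1)) ++ [1] ++ peano (n + 1) ++ [2] ++ peano (n + 1)
        ++ [3] ++ phi2 (peano (n + 1))

/-- Number of rises of a word. -/
def rises (w : List ℕ) : ℕ := ((w.zip w.tail).filter (fun p => p.1 < p.2)).length

/-- Number of descents of a word. -/
def descents (w : List ℕ) : ℕ := ((w.zip w.tail).filter (fun p => p.2 < p.1)).length

/-- Number of occurrences of the pattern `[1-2^ℓ)`: sets of `ℓ` positions, none of them
the first, at which the letters of `w` all coincide and are larger than the first letter. -/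
def pat12Count (w : List ℕ) (ℓ : ℕ) : ℕ :=
  (Finset.univ.filter (fun s : Finset (Fin w.length) =>
    s.card = ℓ ∧ (∀ i ∈ s, 0 < (i : ℕ)) ∧ (∀ i ∈ s, ∀ j ∈ s, w.get i = w.get j) ∧
      ∀ i ∈ s, w.headI < w.get i)).card

/-! ### Auxiliary lemmas -/

lemma count_map_cond (f : ℕ → ℕ) (v u : ℕ) :
    ∀ (l : List ℕ), (∀ x ∈ l, (f x = v ↔ x = u)) → (l.map f).count v = l.count u := by
  intro l
  induction l with
  | nil => simp
  | cons a t ih =>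
    intro h
    have ha := h a (by simp)
    simp [List.count_cons, ih (fun x hx => h x (by simp [hx])), ha]

lemma count_phi1 (l : List ℕ) (hl : ∀ x ∈ l, 1 ≤ x ∧ x ≤ 4) (v u : ℕ)
    (hvu : ∀ x, 1 ≤ x → x ≤ 4 → ((if x = 1 then 4 else x - 1) = v ↔ x = u)) :
    (phi1 l).count v = l.count u := by
  unfold phi1
  rw [count_map_cond _ v u _ (fun x hx => by
    obtain ⟨h1, h2⟩ := hl x (List.mem_reverse.mp hx)
    exact hvu x h1 h2), List.count_reverse]

lemma count_phi2 (l : List ℕ) (hl : ∀ x ∈ l, 1 ≤ x ∧ x ≤ 4) (v u : ℕ)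
    (hvu : ∀ x, 1 ≤ x → x ≤ 4 → ((if x = 4 then 1 else x + 1) = v ↔ x = u)) :
    (phi2 l).count v = l.count u := by
  unfold phi2
  rw [count_map_cond _ v u _ (fun x hx => by
    obtain ⟨h1, h2⟩ := hl x (List.mem_reverse.mp hx)
    exact hvu x h1 h2), List.count_reverse]

lemma peano_succ_succ (n : ℕ) :
    peano (n + 2) = phi1 (peano (n + 1)) ++ [1] ++ peano (n + 1) ++ [2] ++ peano (n + 1)
      ++ [3] ++ phi2 (peano (n + 1)) := rfl

lemma peano_range : ∀ n, ∀ x ∈ peano n, 1 ≤ x ∧ x ≤ 4 := by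
  intro n
  induction n using Nat.strong_induction_on with
  | _ n ih =>
    match n with
    | 0 => simp [peano]
    | 1 => intro x hx; simp [peano] at hx; omega
    | (m + 2) =>
      intro x hx
      have ihm := ih (m + 1) (by omega)
      rw [peano_succ_succ] at hx
      simp only [phi1, phi2, List.mem_append, List.mem_map, List.mem_reverse,
        List.mem_singleton] at hx
      rcases hx with ((((((⟨y, hy, rfl⟩ | rfl) | h) | rfl) | h) | rfl) | ⟨y, hy, rfl⟩)
      · have := ihm y hy; split_ifs <;> omega
      · omega
      · exact ihm x h
      · omega
      · exact ihm x h
      · omega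
      · have := ihm y hy; split_ifs <;> omega

lemma peano_counts : ∀ n, (peano (n + 1)).count 1 = 4 ^ n ∧
    (peano (n + 1)).count 2 = 4 ^ n + 2 ^ n - 1 ∧
    (peano (n + 1)).count 3 = 4 ^ n ∧ (peano (n + 1)).count 4 = 4 ^ n - 2 ^ n := by
  intro n
  induction n with
  | zero => decide
  | succ m ih =>
    obtain ⟨h1, h2, h3, h4⟩ := ih
    have hr := peano_range (m + 1)
    have e11 : (phi1 (peano (m + 1))).count 1 = (peano (m + 1)).count 2 :=
      count_phi1 _ hr 1 2 (by intro x hx1 hx4; interval_cases x <;> simp)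
    have e12 : (phi1 (peano (m + 1))).count 2 = (peano (m + 1)).count 3 :=
      count_phi1 _ hr 2 3 (by intro x hx1 hx4; interval_cases x <;> simp)
    have e13 : (phi1 (peano (m + 1))).count 3 = (peano (m + 1)).count 4 :=
      count_phi1 _ hr 3 4 (by intro x hx1 hx4; interval_cases x <;> simp)
    have e14 : (phi1 (peano (m + 1))).count 4 = (peano (m + 1)).count 1 :=
      count_phi1 _ hr 4 1 (by intro x hx1 hx4; interval_cases x <;> simp)
    have e21 : (phi2 (peano (m + 1))).count 1 = (peano (m + 1)).count 4 :=
      count_phi2 _ hr 1 4 (by intro x hx1 hx4; interval_cases x <;> simp)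
    have e22 : (phi2 (peano (m + 1))).count 2 = (peano (m + 1)).count 1 :=
      count_phi2 _ hr 2 1 (by intro x hx1 hx4; interval_cases x <;> simp)
    have e23 : (phi2 (peano (m + 1))).count 3 = (peano (m + 1)).count 2 :=
      count_phi2 _ hr 3 2 (by intro x hx1 hx4; interval_cases x <;> simp)
    have e24 : (phi2 (peano (m + 1))).count 4 = (peano (m + 1)).count 3 :=
      count_phi2 _ hr 4 3 (by intro x hx1 hx4; interval_cases x <;> simp)
    have h2pow : 1 ≤ 2 ^ m := Nat.one_le_two_pow
    have h24 : 2 ^ m ≤ 4 ^ m := Nat.pow_le_pow_left (by norm_num) m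
    rw [peano_succ_succ]
    simp only [List.count_append, e11, e12, e13, e14, e21, e22, e23, e24,
      List.count_singleton', h1, h2, h3, h4]
    norm_num [pow_succ]
    omega

lemma peano_ne_nil : ∀ n, peano (n + 1) ≠ [] := by
  intro n
  cases n with
  | zero => simp [peano]
  | succ m => rw [peano_succ_succ]; simp

lemma phi1_ne_nil (l : List ℕ) (h : l ≠ []) : phi1 l ≠ [] := by simp [phi1, h]

lemma phi2_ne_nil (l : List ℕ) (h : l ≠ []) : phi2 l ≠ [] := by simp [phi2, h]

lemma head?_phi1 (l : List ℕ) :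
    (phi1 l).head? = l.getLast?.map (fun x => if x = 1 then 4 else x - 1) := by
  simp [phi1, List.head?_map, List.head?_reverse]

lemma getLast?_phi2 (l : List ℕ) :
    (phi2 l).getLast? = l.head?.map (fun x => if x = 4 then 1 else x + 1) := by
  simp [phi2, List.getLast?_map, List.getLast?_reverse]

lemma head?_peano_succ (n : ℕ) :
    (peano (n + 2)).head? =
      (peano (n + 1)).getLast?.map (fun x => if x = 1 then 4 else x - 1) := by
  rw [peano_succ_succ]
  simp only [List.append_assoc]
  rw [List.head?_append_of_ne_nil _ (phi1_ne_nil _ (peano_ne_nil n)), head?_phi1]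

lemma getLast?_peano_succ (n : ℕ) :
    (peano (n + 2)).getLast? =
      (peano (n + 1)).head?.map (fun x => if x = 4 then 1 else x + 1) := by
  rw [peano_succ_succ,
    List.getLast?_append_of_ne_nil _ (phi2_ne_nil _ (peano_ne_nil n)), getLast?_phi2]

lemma peano_head_last : ∀ n, (peano (2 * n + 1)).head? = some 1 ∧
    (peano (2 * n + 1)).getLast? = some 3 ∧
    (peano (2 * n + 2)).head? = some 2 ∧ (peano (2 * n + 2)).getLast? = some 2 := by
  intro n
  induction n with
  | zero => decide
  | succ m ih =>
    obtain ⟨ih1, ih2, ih3, ih4⟩ := ih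
    have e1 : 2 * (m + 1) + 1 = (2 * m + 2) + 1 := by ring
    have e2 : 2 * (m + 1) + 2 = (2 * m + 3) + 1 := by ring
    have g1 : (peano (2 * m + 3)).head? = some 1 := by
      rw [show (2 * m + 3) = (2 * m + 1) + 2 by ring, head?_peano_succ, ih4]; rfl
    have g2 : (peano (2 * m + 3)).getLast? = some 3 := by
      rw [show (2 * m + 3) = (2 * m + 1) + 2 by ring, getLast?_peano_succ, ih3]; rfl
    refine ⟨by rw [show 2 * (m + 1) + 1 = 2 * m + 3 by ring]; exact g1,
      by rw [show 2 * (m + 1) + 1 = 2 * m + 3 by ring]; exact g2, ?_, ?_⟩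
    · rw [show 2 * (m + 1) + 2 = (2 * m + 2) + 2 by ring, head?_peano_succ, g2]; rfl
    · rw [show 2 * (m + 1) + 2 = (2 * m + 2) + 2 by ring, getLast?_peano_succ, g1]; rfl

lemma get_zero_eq_headI (l : List ℕ) (i : Fin l.length) (h : (i : ℕ) = 0) :
    l.get i = l.headI := by
  cases l with
  | nil => exact absurd i.isLt (by simp)
  | cons a t =>
    rcases i with ⟨iv, hlt⟩
    simp only at h
    subst h
    rfl

lemma count_get (l : List ℕ) (v : ℕ) :
    (Finset.univ.filter (fun i : Fin l.length => l.get i = v)).card = l.count v := by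
  induction l with
  | nil => simp
  | cons a t ih =>
    rw [Finset.card_filter] at ih ⊢
    show (∑ i : Fin (t.length + 1), if (a :: t).get i = v then 1 else 0) = _
    rw [Fin.sum_univ_succ]
    simp only [List.get_eq_getElem, Fin.val_succ, List.getElem_cons_succ,
      List.getElem_cons_zero, Fin.val_zero] at ih ⊢
    rw [ih, List.count_cons, Nat.add_comm]
    simp
    split_ifs with h <;> simp [h]

theorem peano_pat12_even (k ℓ : ℕ) (hℓ : 1 ≤ ℓ) :
    pat12Count (peano (2 * k + 2)) ℓ =
      Nat.choose (4 ^ (2 * k + 1)) ℓ + Nat.choose (4 ^ (2 * k + 1) - 2 ^ (2 * k + 1)) ℓ := by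
  have hrange := peano_range (2 * k + 2)
  have hhead : (peano (2 * k + 2)).head? = some 2 := (peano_head_last k).2.2.1
  obtain ⟨t, ht⟩ : ∃ t, peano (2 * k + 2) = 2 :: t := by
    cases hw : peano (2 * k + 2) with
    | nil => rw [hw] at hhead; simp at hhead
    | cons a t => rw [hw] at hhead; simp at hhead; exact ⟨t, by rw [hhead]⟩
  set w := peano (2 * k + 2) with hwdef
  have hheadI : w.headI = 2 := by rw [ht]; rfl
  have hget0 : ∀ i : Fin w.length, (i : ℕ) = 0 → w.get i = 2 := fun i hi =>
    (get_zero_eq_headI w i hi).trans hheadI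
  set S3 : Finset (Fin w.length) := Finset.univ.filter (fun i => w.get i = 3) with hS3
  set S4 : Finset (Fin w.length) := Finset.univ.filter (fun i => w.get i = 4) with hS4
  have key : (Finset.univ.filter (fun s : Finset (Fin w.length) =>
      s.card = ℓ ∧ (∀ i ∈ s, 0 < (i : ℕ)) ∧ (∀ i ∈ s, ∀ j ∈ s, w.get i = w.get j) ∧
        ∀ i ∈ s, w.headI < w.get i)) =
      Finset.powersetCard ℓ S3 ∪ Finset.powersetCard ℓ S4 := by
    ext s
    simp only [Finset.mem_filter, Finset.mem_univ, true_and, Finset.mem_union,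
      Finset.mem_powersetCard]
    constructor
    · rintro ⟨hcard, hpos, heq, hgt⟩
      obtain ⟨i, hi⟩ := Finset.card_pos.mp (by omega : 0 < s.card)
      have h1 : 2 < w.get i := hheadI ▸ hgt i hi
      have h2 : w.get i ≤ 4 := (hrange _ (w.get_mem i)).2
      have h34 : w.get i = 3 ∨ w.get i = 4 := by omega
      rcases h34 with h | h
      · exact Or.inl ⟨fun j hj => Finset.mem_filter.mpr
          ⟨Finset.mem_univ _, (heq j hj i hi).trans h⟩, hcard⟩
      · exact Or.inr ⟨fun j hj => Finset.mem_filter.mpr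
          ⟨Finset.mem_univ _, (heq j hj i hi).trans h⟩, hcard⟩
    · have : ∀ v : ℕ, 2 < v →
          s ⊆ Finset.univ.filter (fun i => w.get i = v) → s.card = ℓ →
          (s.card = ℓ ∧ (∀ i ∈ s, 0 < (i : ℕ)) ∧ (∀ i ∈ s, ∀ j ∈ s, w.get i = w.get j) ∧
            ∀ i ∈ s, w.headI < w.get i) := by
        intro v hv hs hcard
        refine ⟨hcard, ?_, ?_, ?_⟩
        · intro i hi
          have h3 : w.get i = v := (Finset.mem_filter.mp (hs hi)).2
          by_contra h0
          push_neg at h0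
          have hi0 : (i : ℕ) = 0 := by omega
          rw [hget0 i hi0] at h3
          omega
        · intro i hi j hj
          rw [(Finset.mem_filter.mp (hs hi)).2, (Finset.mem_filter.mp (hs hj)).2]
        · intro i hi
          rw [hheadI, (Finset.mem_filter.mp (hs hi)).2]
          omega
      rintro (⟨hs, hcard⟩ | ⟨hs, hcard⟩)
      · exact this 3 (by omega) hs hcard
      · exact this 4 (by omega) hs hcard
  have hdis : Disjoint (Finset.powersetCard ℓ S3) (Finset.powersetCard ℓ S4) := by
    rw [Finset.disjoint_left]
    intro s h3 h4
    rw [Finset.mem_powersetCard] at h3 h4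
    obtain ⟨i, hi⟩ := Finset.card_pos.mp (by omega : 0 < s.card)
    have hh3 := (Finset.mem_filter.mp (h3.1 hi)).2
    have hh4 := (Finset.mem_filter.mp (h4.1 hi)).2
    omega
  have hc := peano_counts (2 * k + 1)
  have hc3 : w.count 3 = 4 ^ (2 * k + 1) := hc.2.2.1
  have hc4 : w.count 4 = 4 ^ (2 * k + 1) - 2 ^ (2 * k + 1) := hc.2.2.2
  rw [pat12Count, key, Finset.card_union_of_disjoint hdis, Finset.card_powersetCard,
    Finset.card_powersetCard, hS3, hS4, count_get, count_get, hc3, hc4]
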